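/- arXiv:1409.2214 — 3 statements merged into one kernel-verified Lean document; each statement's English description precedes it below -/
import Mathlib

section
/- Let A and B be N×N real symmetric matrices with eigenvalues λ^A_1 ≤ λ^A_2 ≤ ... ≤ λ^A_N and λ^B_1 ≤ λ^B_2 ≤ ... ≤ λ^B_N respectively (listed with multiplicity in increasing order). Then ∑_{i=1}^N |λ^A_i − λ^B_i|² ≤ tr((A−B)²). -/
open Finset Matrix Polynomial

section Aux
variable {N : ℕ}

lemma hw_charpoly_conj {n R : Type*} [Fintype n] [DecidableEq n] [CommRing R]
    (U V D : Matrix n n R) (hUV : U * V = 1) (hVU : V * U = 1) :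
    (U * D * V).charpoly = D.charpoly := by
  have hmap : ∀ M₁ M₂ : Matrix n n R, (M₁ * M₂).map (C : R →+* R[X]) =
      M₁.map C * M₂.map C := fun M₁ M₂ => by
    simpa using (C : R →+* R[X]).mapMatrix.map_mul M₁ M₂
  have h1 : (U.map (C : R →+* R[X])) * (V.map C) = 1 := by
    rw [← hmap, hUV]; simp [Matrix.map_one]
  have h2 : (V.map (C : R →+* R[X])) * (U.map C) = 1 := by
    rw [← hmap, hVU]; simp [Matrix.map_one]
  have hc : charmatrix (U * D * V) = U.map C * charmatrix D * V.map C := by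
    unfold charmatrix
    have hsc : ∀ M : Matrix n n R[X], Matrix.scalar n (X : R[X]) * M = M * Matrix.scalar n X :=
      fun M => (scalar_commute (X : R[X]) (Commute.all X) M)
    rw [mul_sub, sub_mul]
    congr 1
    · rw [← hsc, mul_assoc, h1, mul_one]
    · rw [RingHom.mapMatrix_apply, RingHom.mapMatrix_apply, hmap, hmap]
  rw [Matrix.charpoly, Matrix.charpoly, hc, det_mul, det_mul]
  have : det (U.map (C : R →+* R[X])) * det (V.map C) = 1 := by
    rw [← det_mul, h1, det_one]
  calc det (U.map (C : R →+* R[X])) * det (charmatrix D) * det (V.map C)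
      = det (U.map (C : R →+* R[X])) * det (V.map C) * det (charmatrix D) := by ring
    _ = det (charmatrix D) := by rw [this, one_mul]

lemma hw_charpoly_diagonal {n R : Type*} [Fintype n] [DecidableEq n] [CommRing R] (d : n → R) :
    (Matrix.diagonal d).charpoly = ∏ i, (X - C (d i)) := by
  have : charmatrix (Matrix.diagonal d) = Matrix.diagonal (fun i => X - C (d i)) := by
    ext i j
    by_cases h : i = j
    · subst h; simp [charmatrix_apply]
    · simp [charmatrix_apply, Matrix.diagonal_apply_ne _ h]
  rw [Matrix.charpoly, this, det_diagonal]

lemma hw_charpoly_eig (A : Matrix (Fin N) (Fin N) ℝ) (hA : A.IsHermitian) :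
    A.charpoly = ∏ i, (X - C (hA.eigenvalues i)) := by
  have hsp := hA.spectral_theorem
  have hUV : (hA.eigenvectorUnitary : Matrix (Fin N) (Fin N) ℝ) *
      star (hA.eigenvectorUnitary : Matrix (Fin N) (Fin N) ℝ) = 1 :=
    Matrix.mem_unitaryGroup_iff.mp hA.eigenvectorUnitary.2
  have hVU : star (hA.eigenvectorUnitary : Matrix (Fin N) (Fin N) ℝ) *
      (hA.eigenvectorUnitary : Matrix (Fin N) (Fin N) ℝ) = 1 :=
    Matrix.mem_unitaryGroup_iff'.mp hA.eigenvectorUnitary.2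
  have hid : Matrix.diagonal (RCLike.ofReal ∘ hA.eigenvalues) = Matrix.diagonal hA.eigenvalues := by
    simp [RCLike.ofReal_real_eq_id]
  calc A.charpoly = ((hA.eigenvectorUnitary : Matrix (Fin N) (Fin N) ℝ) *
        Matrix.diagonal hA.eigenvalues *
        star (hA.eigenvectorUnitary : Matrix (Fin N) (Fin N) ℝ)).charpoly := by
        rw [← hid]; exact congrArg Matrix.charpoly hsp
    _ = (Matrix.diagonal hA.eigenvalues).charpoly := hw_charpoly_conj _ _ _ hUV hVU
    _ = ∏ i, (X - C (hA.eigenvalues i)) := hw_charpoly_diagonal _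

end Aux

section Aux2
variable {N : ℕ}

lemma hw_monotone_eq {f g : Fin N → ℝ} (hf : Monotone f) (hg : Monotone g)
    (h : Multiset.map f Finset.univ.val = Multiset.map g Finset.univ.val) : f = g := by
  apply List.ofFn_injective
  refine List.Perm.eq_of_sortedLE hf.sortedLE_ofFn hg.sortedLE_ofFn ?_
  rw [Fin.univ_val_map, Fin.univ_val_map] at h
  exact Multiset.coe_eq_coe.mp h

lemma hw_exists_perm {f g : Fin N → ℝ} (hf : Monotone f)
    (h : Multiset.map f Finset.univ.val = Multiset.map g Finset.univ.val) :
    ∃ σ : Equiv.Perm (Fin N), f = g ∘ σ := by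
  refine ⟨Tuple.sort g, hw_monotone_eq hf (Tuple.monotone_sort g) ?_⟩
  rw [h]
  have : Multiset.map (g ∘ Tuple.sort g) Finset.univ.val =
      Multiset.map g (Multiset.map (Tuple.sort g) Finset.univ.val) := by
    rw [Multiset.map_map]
  rw [this]
  congr 1
  exact congrArg Finset.val (Finset.map_univ_equiv (Tuple.sort g)).symm

lemma hw_roots_eq {f g : Fin N → ℝ}
    (h : (∏ i, (X - C (f i))) = ∏ i, (X - C (g i))) :
    Multiset.map f Finset.univ.val = Multiset.map g Finset.univ.val := by
  have key : ∀ u : Fin N → ℝ,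
      (∏ i, (X - C (u i))).roots = Multiset.map u Finset.univ.val := by
    intro u
    have : (∏ i, (X - C (u i))) =
        ((Multiset.map u Finset.univ.val).map (fun a => X - C a)).prod := by
      rw [Multiset.map_map]
      rfl
    rw [this, roots_multiset_prod_X_sub_C]
  rw [← key f, ← key g, h]

end Aux2

section Aux3
variable {N : ℕ}

lemma hw_trace_diag (d e : Fin N → ℝ) (M : Matrix (Fin N) (Fin N) ℝ) :
    (Matrix.diagonal d * M * Matrix.diagonal e * Mᵀ).trace
      = ∑ i, ∑ j, d i * e j * (M i j) ^ 2 := by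
  simp only [Matrix.trace, Matrix.diag_apply, Matrix.mul_apply, Matrix.transpose_apply,
    Matrix.diagonal_apply, ite_mul, zero_mul, Finset.sum_ite_eq, Finset.mem_univ, if_true]
  refine Finset.sum_congr rfl fun i _ => ?_
  simp only [mul_ite, mul_zero, Finset.sum_ite_eq', Finset.mem_univ, if_true]
  refine Finset.sum_congr rfl fun j _ => ?_
  ring

lemma hw_perm_sum (a b : Fin N → ℝ) (σ : Equiv.Perm (Fin N)) (i : Fin N) :
    ∑ j, a i * b j * (σ.permMatrix ℝ) i j = a i * b (σ i) := by
  rw [Finset.sum_eq_single (σ i)]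
  · simp [Equiv.Perm.permMatrix, PEquiv.toMatrix_apply, Equiv.toPEquiv_apply]
  · intro j _ hj
    simp [Equiv.Perm.permMatrix, PEquiv.toMatrix_apply, Equiv.toPEquiv_apply, Ne.symm hj]
  · simp

lemma hw_key (a b : Fin N → ℝ) (ha : Monotone a) (hb : Monotone b)
    (S : Matrix (Fin N) (Fin N) ℝ) (hS : S ∈ doublyStochastic ℝ (Fin N)) :
    ∑ i, ∑ j, a i * b j * S i j ≤ ∑ i, a i * b i := by
  obtain ⟨w, hw0, hw1, hwS⟩ := exists_eq_sum_perm_of_mem_doublyStochastic hS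
  have hmono : Monovary a b := fun i j h =>
    ha (le_of_not_ge fun hji => absurd (hb hji) (not_le.mpr h))
  have step : ∑ i, ∑ j, a i * b j * S i j
      = ∑ σ : Equiv.Perm (Fin N), w σ * ∑ i, a i * b (σ i) := by
    calc ∑ i, ∑ j, a i * b j * S i j
        = ∑ i, ∑ σ : Equiv.Perm (Fin N), ∑ j,
            w σ * (a i * b j * (σ.permMatrix ℝ) i j) := by
          refine Finset.sum_congr rfl fun i _ => ?_
          rw [Finset.sum_comm]
          refine Finset.sum_congr rfl fun j _ => ?_
          rw [← hwS, Matrix.sum_apply, Finset.mul_sum]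
          refine Finset.sum_congr rfl fun σ _ => ?_
          simp only [Matrix.smul_apply, smul_eq_mul]
          ring
      _ = ∑ σ : Equiv.Perm (Fin N), ∑ i, ∑ j,
            w σ * (a i * b j * (σ.permMatrix ℝ) i j) := Finset.sum_comm
      _ = ∑ σ : Equiv.Perm (Fin N), w σ * ∑ i, a i * b (σ i) := by
          refine Finset.sum_congr rfl fun σ _ => ?_
          rw [Finset.mul_sum]
          refine Finset.sum_congr rfl fun i _ => ?_
          rw [← Finset.mul_sum, hw_perm_sum]
  rw [step]
  calc ∑ σ : Equiv.Perm (Fin N), w σ * ∑ i, a i * b (σ i)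
      ≤ ∑ σ : Equiv.Perm (Fin N), w σ * ∑ i, a i * b i := by
        refine Finset.sum_le_sum fun σ _ => mul_le_mul_of_nonneg_left ?_ (hw0 σ)
        exact hmono.sum_mul_comp_perm_le_sum_mul
    _ = ∑ i, a i * b i := by rw [← Finset.sum_mul, hw1, one_mul]

lemma hw_submatrix_ds {S : Matrix (Fin N) (Fin N) ℝ} (hS : S ∈ doublyStochastic ℝ (Fin N))
    (σ τ : Equiv.Perm (Fin N)) : S.submatrix σ τ ∈ doublyStochastic ℝ (Fin N) := by
  rw [mem_doublyStochastic_iff_sum] at hS ⊢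
  obtain ⟨h0, hr, hc⟩ := hS
  refine ⟨fun i j => h0 _ _, fun i => ?_, fun j => ?_⟩
  · rw [show ∑ j, S.submatrix σ τ i j = ∑ j, S (σ i) (τ j) from rfl, Equiv.sum_comp τ (S (σ i))]
    exact hr _
  · rw [show ∑ i, S.submatrix σ τ i j = ∑ i, S (σ i) (τ j) from rfl,
      Equiv.sum_comp σ (fun i => S i (τ j))]
    exact hc _

end Aux3

section Aux4
variable {N : ℕ}

lemma hw_trace_mul (A B : Matrix (Fin N) (Fin N) ℝ) (hA : A.IsHermitian) (hB : B.IsHermitian) :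
    ∃ S ∈ doublyStochastic ℝ (Fin N),
      (A * B).trace = ∑ i, ∑ j, hA.eigenvalues i * hB.eigenvalues j * S i j := by
  set U : Matrix (Fin N) (Fin N) ℝ := ↑hA.eigenvectorUnitary with hU
  set V : Matrix (Fin N) (Fin N) ℝ := ↑hB.eigenvectorUnitary with hV
  set W : Matrix (Fin N) (Fin N) ℝ := star U * V with hW
  have hUU : U * star U = 1 := Matrix.mem_unitaryGroup_iff.mp hA.eigenvectorUnitary.2
  have hUU' : star U * U = 1 := Matrix.mem_unitaryGroup_iff'.mp hA.eigenvectorUnitary.2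
  have hVV : V * star V = 1 := Matrix.mem_unitaryGroup_iff.mp hB.eigenvectorUnitary.2
  have hVV' : star V * V = 1 := Matrix.mem_unitaryGroup_iff'.mp hB.eigenvectorUnitary.2
  have hWW : W * Wᵀ = 1 := by
    rw [← Matrix.conjTranspose_eq_transpose_of_trivial, ← Matrix.star_eq_conjTranspose, hW,
      StarMul.star_mul, star_star, mul_assoc, ← mul_assoc V, hVV, one_mul, hUU']
  have hWW' : Wᵀ * W = 1 := by
    rw [← Matrix.conjTranspose_eq_transpose_of_trivial, ← Matrix.star_eq_conjTranspose, hW,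
      StarMul.star_mul, star_star, mul_assoc, ← mul_assoc U, hUU, one_mul, hVV']
  refine ⟨Matrix.of fun i j => (W i j) ^ 2, ?_, ?_⟩
  · rw [mem_doublyStochastic_iff_sum]
    refine ⟨fun i j => sq_nonneg _, fun i => ?_, fun j => ?_⟩
    · have : (W * Wᵀ) i i = 1 := by rw [hWW]; simp
      rw [Matrix.mul_apply] at this
      simpa [pow_two] using this
    · have : (Wᵀ * W) j j = 1 := by rw [hWW']; simp
      rw [Matrix.mul_apply] at this
      simpa [pow_two] using this
  · have hid : ∀ (C : Matrix (Fin N) (Fin N) ℝ) (hC : C.IsHermitian),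
        Matrix.diagonal (RCLike.ofReal ∘ hC.eigenvalues) = Matrix.diagonal hC.eigenvalues := by
      intro C hC; simp [RCLike.ofReal_real_eq_id]
    have hsA := hA.spectral_theorem
    have hsB := hB.spectral_theorem
    rw [hid A hA] at hsA
    rw [hid B hB] at hsB
    have hWT : Wᵀ = star V * U := by
      rw [← Matrix.conjTranspose_eq_transpose_of_trivial, ← Matrix.star_eq_conjTranspose, hW,
        StarMul.star_mul, star_star]
    have key : A * B = U * (Matrix.diagonal hA.eigenvalues * W *
        Matrix.diagonal hB.eigenvalues * Wᵀ) * star U := by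
      conv_lhs => rw [hsA, hsB, Unitary.conjStarAlgAut_apply, Unitary.conjStarAlgAut_apply]
      conv_rhs => rw [hWT, hW]
      simp only [Matrix.mul_assoc]
      rw [hUU, Matrix.mul_one]
    rw [key, Matrix.trace_mul_comm, ← Matrix.mul_assoc, hUU', one_mul, hw_trace_diag]
    rfl
end Aux4

lemma hw_trace_sq {N : ℕ} (A : Matrix (Fin N) (Fin N) ℝ) (hA : A.IsHermitian) :
    (A * A).trace = ∑ i, hA.eigenvalues i ^ 2 := by
  set U : Matrix (Fin N) (Fin N) ℝ := ↑hA.eigenvectorUnitary with hU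
  have hUU' : star U * U = 1 := Matrix.mem_unitaryGroup_iff'.mp hA.eigenvectorUnitary.2
  have hsA : A = U * Matrix.diagonal hA.eigenvalues * star U := by
    have := hA.spectral_theorem
    rwa [show Matrix.diagonal (RCLike.ofReal ∘ hA.eigenvalues)
      = Matrix.diagonal hA.eigenvalues by simp [RCLike.ofReal_real_eq_id]] at this
  have key : A * A = U * (Matrix.diagonal hA.eigenvalues * (Matrix.diagonal hA.eigenvalues
      * star U)) := by
    conv_lhs => rw [hsA]
    simp only [Matrix.mul_assoc]
    rw [← Matrix.mul_assoc (star U) U, hUU', Matrix.one_mul]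
  rw [key, Matrix.trace_mul_comm]
  simp only [← Matrix.mul_assoc]
  rw [Matrix.mul_assoc _ (star U) U, hUU', Matrix.mul_one, Matrix.diagonal_mul_diagonal,
    Matrix.trace_diagonal]
  exact Finset.sum_congr rfl fun i _ => (pow_two _).symm


open Polynomial in
/-- **Hoffman–Wielandt inequality.** If `A, B` are real symmetric `N × N` matrices with
eigenvalues (with multiplicity, in nondecreasing order) `lA` and `lB`, then
`∑ i, |lA i - lB i|² ≤ tr((A - B)²)`. -/
theorem hoffman_wielandt (N : ℕ) (A B : Matrix (Fin N) (Fin N) ℝ)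
    (hA : A.IsSymm) (hB : B.IsSymm)
    (lA lB : Fin N → ℝ) (hlA : Monotone lA) (hlB : Monotone lB)
    (hchA : A.charpoly = ∏ i, (X - C (lA i)))
    (hchB : B.charpoly = ∏ i, (X - C (lB i))) :
    ∑ i, |lA i - lB i| ^ 2 ≤ ((A - B) * (A - B)).trace := by
  have hAh : A.IsHermitian := by
    rw [Matrix.IsHermitian, Matrix.conjTranspose_eq_transpose_of_trivial]; exact hA
  have hBh : B.IsHermitian := by
    rw [Matrix.IsHermitian, Matrix.conjTranspose_eq_transpose_of_trivial]; exact hB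
  set μ := hAh.eigenvalues with hμ
  set ν := hBh.eigenvalues with hν
  have hmA : Multiset.map lA Finset.univ.val = Multiset.map μ Finset.univ.val :=
    hw_roots_eq (by rw [← hchA, hw_charpoly_eig A hAh])
  have hmB : Multiset.map lB Finset.univ.val = Multiset.map ν Finset.univ.val :=
    hw_roots_eq (by rw [← hchB, hw_charpoly_eig B hBh])
  obtain ⟨σ, hσ⟩ := hw_exists_perm hlA hmA
  obtain ⟨τ, hτ⟩ := hw_exists_perm hlB hmB
  obtain ⟨S, hSds, hS⟩ := hw_trace_mul A B hAh hBh
  have htr : ((A - B) * (A - B)).trace = (A * A).trace - 2 * (A * B).trace + (B * B).trace := by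
    rw [sub_mul, mul_sub, mul_sub, Matrix.trace_sub, Matrix.trace_sub, Matrix.trace_sub,
      Matrix.trace_mul_comm B A]
    ring
  have hA2 : ∑ i, lA i ^ 2 = (A * A).trace := by
    rw [hw_trace_sq A hAh, hσ]
    exact Equiv.sum_comp σ (fun i => μ i ^ 2)
  have hB2 : ∑ i, lB i ^ 2 = (B * B).trace := by
    rw [hw_trace_sq B hBh, hτ]
    exact Equiv.sum_comp τ (fun i => ν i ^ 2)
  have hAB : (A * B).trace ≤ ∑ i, lA i * lB i := by
    rw [hS]
    have hre : ∑ i, ∑ j, μ i * ν j * S i j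
        = ∑ i, ∑ j, lA i * lB j * (S.submatrix σ τ) i j := by
      calc ∑ i, ∑ j, μ i * ν j * S i j
          = ∑ i, ∑ j, μ (σ i) * ν j * S (σ i) j :=
            (Equiv.sum_comp σ (fun i => ∑ j, μ i * ν j * S i j)).symm
        _ = ∑ i, ∑ j, μ (σ i) * ν (τ j) * S (σ i) (τ j) :=
            Finset.sum_congr rfl fun i _ =>
              (Equiv.sum_comp τ (fun j => μ (σ i) * ν j * S (σ i) j)).symm
        _ = ∑ i, ∑ j, lA i * lB j * (S.submatrix σ τ) i j := by rw [hσ, hτ]; rfl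
    rw [hre]
    exact hw_key lA lB hlA hlB _ (hw_submatrix_ds hSds σ τ)
  have hexp : ∑ i, |lA i - lB i| ^ 2
      = ∑ i, lA i ^ 2 - 2 * ∑ i, lA i * lB i + ∑ i, lB i ^ 2 := by
    rw [Finset.mul_sum, ← Finset.sum_sub_distrib, ← Finset.sum_add_distrib]
    refine Finset.sum_congr rfl fun i _ => ?_
    rw [sq_abs]
    ring
  rw [hexp, htr]
  linarith
end

section
/- Let A and B be d×d real symmetric matrices with eigenvalues λ^A_1 ≤ ... ≤ λ^A_d and λ^B_1 ≤ ... ≤ λ^B_d listed in nondecreasing order. Then ∑_{i=1}^d |λ^A_i − λ^B_i| ≤ √d · ∑_{i,j=1}^d |A_{ij} − B_{ij}|. -/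
open Matrix Polynomial Finset

private lemma monotone_eq_of_multiset_map_eq {d : ℕ} {u v : Fin d → ℝ}
    (hu : Monotone u) (hv : Monotone v)
    (h : Multiset.map u Finset.univ.val = Multiset.map v Finset.univ.val) : u = v := by
  rw [Fin.univ_val_map, Fin.univ_val_map, Multiset.coe_eq_coe] at h
  exact List.ofFn_inj.1
    (List.Perm.eq_of_sortedLE (List.sortedLE_ofFn_iff.2 hu) (List.sortedLE_ofFn_iff.2 hv) h)

private lemma charpoly_conj {d : ℕ} (U D : Matrix (Fin d) (Fin d) ℝ) (hU : U * star U = 1) :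
    (U * D * star U).charpoly = D.charpoly := by
  have hU' : star U * U = 1 := mul_eq_one_comm.1 hU
  have hsm : (Matrix.scalar (Fin d) (X : ℝ[X])) = (X : ℝ[X]) • (1 : Matrix (Fin d) (Fin d) ℝ[X]) := by
    rw [smul_eq_diagonal_mul]
    simp [Matrix.scalar]
  have hcm : charmatrix (U * D * star U)
      = C.mapMatrix U * charmatrix D * C.mapMatrix (star U) := by
    rw [charmatrix, charmatrix, mul_sub, sub_mul]
    congr 1
    · rw [hsm, mul_smul_comm, smul_mul_assoc, mul_one, ← _root_.map_mul, hU, _root_.map_one]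
    · simp only [RingHom.mapMatrix_apply, Matrix.map_mul]
  rw [Matrix.charpoly, Matrix.charpoly, hcm, det_mul, det_mul, mul_comm, ← mul_assoc, ← det_mul,
    ← _root_.map_mul C.mapMatrix, hU', _root_.map_one, det_one, one_mul]

private lemma charpoly_eq_prod_eigenvalues {d : ℕ} {A : Matrix (Fin d) (Fin d) ℝ}
    (hA : A.IsHermitian) :
    A.charpoly = ∏ i, (X - C (hA.eigenvalues i)) := by
  have hU1 : (hA.eigenvectorUnitary : Matrix (Fin d) (Fin d) ℝ) *
      star (hA.eigenvectorUnitary : Matrix (Fin d) (Fin d) ℝ) = 1 :=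
    mem_unitaryGroup_iff.1 hA.eigenvectorUnitary.2
  have hspec : A = (hA.eigenvectorUnitary : Matrix (Fin d) (Fin d) ℝ) * diagonal hA.eigenvalues *
      star (hA.eigenvectorUnitary : Matrix (Fin d) (Fin d) ℝ) := by
    have := hA.spectral_theorem
    rwa [RCLike.ofReal_real_eq_id, Function.id_comp] at this
  calc A.charpoly = (diagonal hA.eigenvalues).charpoly := by
        conv_lhs => rw [hspec]
        exact charpoly_conj _ _ hU1
    _ = ∏ i, (X - C (hA.eigenvalues i)) := by
        rw [charpoly_of_upperTriangular _ (blockTriangular_diagonal _)]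
        simp

private lemma exists_perm_eigenvalues {d : ℕ} {A : Matrix (Fin d) (Fin d) ℝ}
    (hA : A.IsHermitian) {l : Fin d → ℝ} (hl : Monotone l)
    (hch : A.charpoly = ∏ i, (X - C (l i))) :
    ∃ σ : Equiv.Perm (Fin d), l = hA.eigenvalues ∘ σ := by
  have key : ∀ g : Fin d → ℝ, (∏ i, (X - C (g i))).roots = Multiset.map g Finset.univ.val := by
    intro g
    have h1 : ∏ i, (X - C (g i)) = ((Multiset.map g Finset.univ.val).map fun a => X - C a).prod := by
      rw [Multiset.map_map]
      rfl
    rw [h1, roots_multiset_prod_X_sub_C]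
  have hms : Multiset.map l Finset.univ.val = Multiset.map hA.eigenvalues Finset.univ.val := by
    rw [← key l, ← key hA.eigenvalues, ← hch, ← charpoly_eq_prod_eigenvalues hA]
  refine ⟨Tuple.sort hA.eigenvalues, ?_⟩
  refine monotone_eq_of_multiset_map_eq hl (Tuple.monotone_sort _) ?_
  rw [hms]
  have h3 : Multiset.map (hA.eigenvalues ∘ (Tuple.sort hA.eigenvalues)) Finset.univ.val
      = Multiset.map hA.eigenvalues (Multiset.map (Tuple.sort hA.eigenvalues) Finset.univ.val) := by
    rw [Multiset.map_map]
  rw [h3]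
  congr 1
  have h2 := congrArg Finset.val (Finset.map_univ_equiv (Tuple.sort hA.eigenvalues))
  exact (by simpa using h2 : Multiset.map (⇑(Tuple.sort hA.eigenvalues)) Finset.univ.val = Finset.univ.val).symm

private lemma ds_bound {d : ℕ} (S : Matrix (Fin d) (Fin d) ℝ) (x y : Fin d → ℝ)
    (hx : Monotone x) (hy : Monotone y)
    (h0 : ∀ i j, 0 ≤ S i j) (hrow : ∀ i, ∑ j, S i j = 1) (hcol : ∀ j, ∑ i, S i j = 1) :
    ∑ i, ∑ j, S i j * (x i * y j) ≤ ∑ i, x i * y i := by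
  have hS : S ∈ doublyStochastic ℝ (Fin d) :=
    mem_doublyStochastic_iff_sum.2 ⟨fun i j => h0 i j, hrow, hcol⟩
  obtain ⟨w, hw0, hw1, hwS⟩ := exists_eq_sum_perm_of_mem_doublyStochastic hS
  have hSij : ∀ i j, S i j = ∑ σ : Equiv.Perm (Fin d), w σ * (σ.permMatrix ℝ) i j := by
    intro i j
    rw [← hwS]
    simp [Matrix.sum_apply, smul_eq_mul]
  have key : ∀ σ : Equiv.Perm (Fin d), ∀ i,
      ∑ j, (σ.permMatrix ℝ) i j * (x i * y j) = x i * y (σ i) := by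
    intro σ i
    rw [Finset.sum_eq_single (σ i)]
    · simp [Equiv.Perm.permMatrix, PEquiv.toMatrix_apply, Equiv.toPEquiv_apply]
    · intro b _ hb
      simp [Equiv.Perm.permMatrix, PEquiv.toMatrix_apply, Equiv.toPEquiv_apply, Ne.symm hb]
    · simp
  calc ∑ i, ∑ j, S i j * (x i * y j)
      = ∑ i, ∑ j, ∑ σ : Equiv.Perm (Fin d), w σ * ((σ.permMatrix ℝ) i j * (x i * y j)) := by
        simp_rw [hSij, Finset.sum_mul, mul_assoc]
    _ = ∑ i, ∑ σ : Equiv.Perm (Fin d), ∑ j, w σ * ((σ.permMatrix ℝ) i j * (x i * y j)) :=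
        Finset.sum_congr rfl fun i _ => Finset.sum_comm
    _ = ∑ σ : Equiv.Perm (Fin d), ∑ i, ∑ j, w σ * ((σ.permMatrix ℝ) i j * (x i * y j)) :=
        Finset.sum_comm
    _ = ∑ σ : Equiv.Perm (Fin d), w σ * ∑ i, x i * y (σ i) := by
        refine Finset.sum_congr rfl fun σ _ => ?_
        rw [Finset.mul_sum]
        exact Finset.sum_congr rfl fun i _ => by rw [← Finset.mul_sum, key σ i]
    _ ≤ ∑ σ : Equiv.Perm (Fin d), w σ * ∑ i, x i * y i := by
        refine Finset.sum_le_sum fun σ _ => mul_le_mul_of_nonneg_left ?_ (hw0 σ)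
        simpa using (hx.monovary hy).sum_smul_comp_perm_le_sum_smul (σ := σ)
    _ = ∑ i, x i * y i := by rw [← Finset.sum_mul, hw1, one_mul]


private lemma trace_diag_conj {d : ℕ} (a b : Fin d → ℝ) (W : Matrix (Fin d) (Fin d) ℝ) :
    Matrix.trace (diagonal a * W * diagonal b * star W)
      = ∑ i, ∑ j, a i * b j * (W i j) ^ 2 := by
  simp only [Matrix.trace, Matrix.diag, Matrix.mul_apply, Matrix.diagonal_apply,
    Matrix.star_apply, star_trivial, ite_mul, zero_mul, Finset.sum_ite_eq,
    Finset.mem_univ, if_true]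
  refine Finset.sum_congr rfl fun i _ => ?_
  simp_rw [Finset.sum_mul]
  rw [Finset.sum_comm]
  refine Finset.sum_congr rfl fun j _ => ?_
  rw [Finset.sum_eq_single j]
  · rw [if_pos rfl]
    ring
  · intro b _ hb
    simp [Ne.symm hb]
  · simp

private lemma spectral_real {d : ℕ} {A : Matrix (Fin d) (Fin d) ℝ} (hA : A.IsHermitian) :
    A = (hA.eigenvectorUnitary : Matrix (Fin d) (Fin d) ℝ) * diagonal hA.eigenvalues *
      star (hA.eigenvectorUnitary : Matrix (Fin d) (Fin d) ℝ) := by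
  have := hA.spectral_theorem
  rwa [RCLike.ofReal_real_eq_id, Function.id_comp] at this

private lemma trace_formula {d : ℕ} {A B : Matrix (Fin d) (Fin d) ℝ}
    (hA : A.IsHermitian) (hB : B.IsHermitian) :
    Matrix.trace (A * B) = ∑ i, ∑ j, hA.eigenvalues i * hB.eigenvalues j *
      ((star (hA.eigenvectorUnitary : Matrix (Fin d) (Fin d) ℝ) *
        (hB.eigenvectorUnitary : Matrix (Fin d) (Fin d) ℝ)) i j) ^ 2 := by
  set UA : Matrix (Fin d) (Fin d) ℝ := (hA.eigenvectorUnitary : Matrix (Fin d) (Fin d) ℝ) with hUA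
  set UB : Matrix (Fin d) (Fin d) ℝ := (hB.eigenvectorUnitary : Matrix (Fin d) (Fin d) ℝ) with hUB
  have hA1 : star UA * UA = 1 := mem_unitaryGroup_iff'.1 hA.eigenvectorUnitary.2
  have key : A * B = UA * (diagonal hA.eigenvalues * (star UA * UB) * diagonal hB.eigenvalues *
      star (star UA * UB)) * star UA := by
    rw [StarMul.star_mul, star_star]
    calc A * B = UA * diagonal hA.eigenvalues * star UA * (UB * diagonal hB.eigenvalues * star UB) := by
          rw [← spectral_real hA, ← spectral_real hB]
      _ = _ := by
          have hA2 : UA * star UA = 1 := mem_unitaryGroup_iff.1 hA.eigenvectorUnitary.2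
          simp only [← mul_assoc]
          rw [mul_assoc _ UA (star UA), hA2, mul_one]
  rw [key, Matrix.trace_mul_cycle, ← mul_assoc, hA1, one_mul, trace_diag_conj]

private lemma row_sum_sq {d : ℕ} {W : Matrix (Fin d) (Fin d) ℝ}
    (hW : W ∈ Matrix.unitaryGroup (Fin d) ℝ) (k : Fin d) : ∑ j, (W k j) ^ 2 = 1 := by
  have h : (W * star W) k k = (1 : Matrix (Fin d) (Fin d) ℝ) k k := by
    rw [mem_unitaryGroup_iff.1 hW]
  simpa [Matrix.mul_apply, Matrix.one_apply, Matrix.conjTranspose_apply, pow_two] using h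

private lemma col_sum_sq {d : ℕ} {W : Matrix (Fin d) (Fin d) ℝ}
    (hW : W ∈ Matrix.unitaryGroup (Fin d) ℝ) (k : Fin d) : ∑ i, (W i k) ^ 2 = 1 := by
  have h : (star W * W) k k = (1 : Matrix (Fin d) (Fin d) ℝ) k k := by
    rw [mem_unitaryGroup_iff'.1 hW]
  simpa [Matrix.mul_apply, Matrix.one_apply, Matrix.conjTranspose_apply, pow_two, mul_comm] using h

private lemma trace_sq_eq {d : ℕ} {A : Matrix (Fin d) (Fin d) ℝ} (hA : A.IsHermitian) :
    Matrix.trace (A * A) = ∑ i, hA.eigenvalues i ^ 2 := by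
  rw [trace_formula hA hA, mem_unitaryGroup_iff'.1 hA.eigenvectorUnitary.2]
  refine Finset.sum_congr rfl fun i _ => ?_
  rw [Finset.sum_eq_single i]
  · simp [Matrix.one_apply, pow_two]
  · intro b _ hb
    simp [Matrix.one_apply, Ne.symm hb]
  · simp

private lemma hoffman_wielandt_s1 {d : ℕ} {A B : Matrix (Fin d) (Fin d) ℝ}
    (hA : A.IsHermitian) (hB : B.IsHermitian) {lA lB : Fin d → ℝ}
    (hlA : Monotone lA) (hlB : Monotone lB) {σA σB : Equiv.Perm (Fin d)}
    (heA : lA = hA.eigenvalues ∘ σA) (heB : lB = hB.eigenvalues ∘ σB) :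
    ∑ i, (lA i - lB i) ^ 2 ≤ Matrix.trace ((A - B) * (A - B)) := by
  set μA := hA.eigenvalues with hμA
  set μB := hB.eigenvalues with hμB
  set W : Matrix (Fin d) (Fin d) ℝ := star (hA.eigenvectorUnitary : Matrix (Fin d) (Fin d) ℝ) *
    (hB.eigenvectorUnitary : Matrix (Fin d) (Fin d) ℝ) with hW
  have hWmem : W ∈ Matrix.unitaryGroup (Fin d) ℝ :=
    mul_mem (Unitary.star_mem hA.eigenvectorUnitary.2) hB.eigenvectorUnitary.2
  -- the key inequality : trace (A * B) ≤ ∑ i, lA i * lB i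
  have hAB : Matrix.trace (A * B) ≤ ∑ i, lA i * lB i := by
    rw [trace_formula hA hB, ← hW]
    have hre : ∑ i, ∑ j, μA i * μB j * (W i j) ^ 2
        = ∑ i, ∑ j, (W (σA i) (σB j)) ^ 2 * (lA i * lB j) := by
      rw [← Equiv.sum_comp σA (fun i => ∑ j, μA i * μB j * (W i j) ^ 2)]
      refine Finset.sum_congr rfl fun i _ => ?_
      rw [← Equiv.sum_comp σB (fun j => μA (σA i) * μB j * (W (σA i) j) ^ 2)]
      refine Finset.sum_congr rfl fun j _ => ?_
      simp only [heA, heB, Function.comp_apply]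
      ring
    rw [hre]
    refine ds_bound _ lA lB hlA hlB (fun i j => sq_nonneg _) (fun i => ?_) (fun j => ?_)
    · rw [Equiv.sum_comp σB (fun j => (W (σA i) j) ^ 2)]
      exact row_sum_sq hWmem _
    · rw [Equiv.sum_comp σA (fun i => (W i (σB j)) ^ 2)]
      exact col_sum_sq hWmem _
  have hlA2 : ∑ i, lA i ^ 2 = ∑ i, μA i ^ 2 := by
    rw [heA]
    exact Equiv.sum_comp σA (fun i => μA i ^ 2)
  have hlB2 : ∑ i, lB i ^ 2 = ∑ i, μB i ^ 2 := by
    rw [heB]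
    exact Equiv.sum_comp σB (fun i => μB i ^ 2)
  have hexp : Matrix.trace ((A - B) * (A - B))
      = Matrix.trace (A * A) - 2 * Matrix.trace (A * B) + Matrix.trace (B * B) := by
    rw [sub_mul, mul_sub, mul_sub, Matrix.trace_sub, Matrix.trace_sub, Matrix.trace_sub,
      Matrix.trace_mul_comm B A]
    ring
  have hL : ∑ i, (lA i - lB i) ^ 2 = ∑ i, lA i ^ 2 - 2 * ∑ i, lA i * lB i + ∑ i, lB i ^ 2 := by
    rw [Finset.mul_sum, ← Finset.sum_sub_distrib, ← Finset.sum_add_distrib]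
    exact Finset.sum_congr rfl fun i _ => by ring
  rw [hL, hexp, trace_sq_eq hA, trace_sq_eq hB]
  have := hlA2
  have := hlB2
  linarith

open Polynomial in
/-- For symmetric `d × d` matrices `A, B` with nondecreasing eigenvalue lists `lA, lB`,
`∑ i, |lA i - lB i| ≤ √d · ∑_{i,j} |A i j - B i j|`. -/
theorem eigenvalue_l1_perturbation (d : ℕ) (A B : Matrix (Fin d) (Fin d) ℝ)
    (hA : A.IsSymm) (hB : B.IsSymm)
    (lA lB : Fin d → ℝ) (hlA : Monotone lA) (hlB : Monotone lB)
    (hchA : A.charpoly = ∏ i, (X - C (lA i)))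
    (hchB : B.charpoly = ∏ i, (X - C (lB i))) :
    ∑ i, |lA i - lB i| ≤ Real.sqrt d * ∑ i, ∑ j, |A i j - B i j| := by
  have hA' : A.IsHermitian := by
    rw [Matrix.IsHermitian, Matrix.conjTranspose_eq_transpose_of_trivial]
    exact hA
  have hB' : B.IsHermitian := by
    rw [Matrix.IsHermitian, Matrix.conjTranspose_eq_transpose_of_trivial]
    exact hB
  obtain ⟨σA, heA⟩ := exists_perm_eigenvalues hA' hlA hchA
  obtain ⟨σB, heB⟩ := exists_perm_eigenvalues hB' hlB hchB
  have hHW := hoffman_wielandt_s1 hA' hB' hlA hlB heA heB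
  set T := ∑ i, ∑ j, |A i j - B i j| with hT
  have hT0 : 0 ≤ T := Finset.sum_nonneg fun i _ => Finset.sum_nonneg fun j _ => abs_nonneg _
  have hMsymm : (A - B).IsSymm := hA.sub hB
  have htr : Matrix.trace ((A - B) * (A - B)) = ∑ i, ∑ j, (A i j - B i j) ^ 2 := by
    simp only [Matrix.trace, Matrix.diag, Matrix.mul_apply]
    refine Finset.sum_congr rfl fun i _ => Finset.sum_congr rfl fun j _ => ?_
    rw [hMsymm.apply i j, pow_two]
    simp [Matrix.sub_apply]
  have h3 : ∑ i, ∑ j, (A i j - B i j) ^ 2 ≤ T ^ 2 := by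
    calc ∑ i, ∑ j, (A i j - B i j) ^ 2
        = ∑ p ∈ Finset.univ ×ˢ Finset.univ, |A p.1 p.2 - B p.1 p.2| ^ 2 := by
          rw [Finset.sum_product]
          simp [sq_abs]
      _ ≤ (∑ p ∈ Finset.univ ×ˢ Finset.univ, |A p.1 p.2 - B p.1 p.2|) ^ 2 :=
          Finset.sum_sq_le_sq_sum_of_nonneg fun p _ => abs_nonneg _
      _ = T ^ 2 := by rw [hT, Finset.sum_product]
  have h4 : (∑ i, |lA i - lB i|) ^ 2 ≤ (d : ℝ) * ∑ i, (lA i - lB i) ^ 2 := by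
    have := sq_sum_le_card_mul_sum_sq (s := Finset.univ)
      (f := fun i : Fin d => |lA i - lB i|)
    simpa [sq_abs] using this
  have h5 : (∑ i, |lA i - lB i|) ^ 2 ≤ (d : ℝ) * T ^ 2 := by
    refine le_trans h4 (mul_le_mul_of_nonneg_left ?_ (Nat.cast_nonneg d))
    exact le_trans (htr ▸ hHW) h3
  have hsum0 : 0 ≤ ∑ i, |lA i - lB i| := Finset.sum_nonneg fun i _ => abs_nonneg _
  calc ∑ i, |lA i - lB i| = Real.sqrt ((∑ i, |lA i - lB i|) ^ 2) := (Real.sqrt_sq hsum0).symm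
    _ ≤ Real.sqrt ((d : ℝ) * T ^ 2) := Real.sqrt_le_sqrt h5
    _ = Real.sqrt d * T := by rw [Real.sqrt_mul (Nat.cast_nonneg d), Real.sqrt_sq hT0]
end

section
/- Let f : [0,2π] → ℝ be continuous with f(0) = f(2π) and define its Fourier coefficients a_k = (1/π)∫₀^{2π} cos(kt) f(t) dt and b_k = (1/π)∫₀^{2π} sin(kt) f(t) dt. Then for every t ∈ [0,2π], the Fejér means S_N(t) = a₀/2 + ∑_{k=1}^N (1 − k/N)(a_k cos(kt) + b_k sin(kt)) converge to f(t) as N → ∞, uniformly in t. -/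
open Real Filter intervalIntegral

lemma sin_sq_sub_sin_sq' (A B : ℝ) :
    Real.sin A ^ 2 - Real.sin B ^ 2 = Real.sin (A + B) * Real.sin (A - B) := by
  rw [Real.sin_add, Real.sin_sub]
  linear_combination Real.sin_sq_add_cos_sq A * Real.sin B ^ 2 -
    Real.sin_sq_add_cos_sq B * Real.sin A ^ 2

lemma dirichlet_id (N : ℕ) (u : ℝ) :
    Real.sin (u / 2) * (1 + ∑ k ∈ Finset.Icc 1 N, 2 * Real.cos (k * u))
      = Real.sin (((N : ℝ) + 1 / 2) * u) := by
  induction N with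
  | zero => norm_num; ring_nf
  | succ n ih =>
    rw [Finset.sum_Icc_succ_top (by omega : 1 ≤ n + 1)]
    have h := Real.sin_sub_sin (((n : ℝ) + 1 + 1 / 2) * u) (((n : ℝ) + 1 / 2) * u)
    have h1 : (((n : ℝ) + 1 + 1 / 2) * u - ((n : ℝ) + 1 / 2) * u) / 2 = u / 2 := by ring
    have h2 : (((n : ℝ) + 1 + 1 / 2) * u + ((n : ℝ) + 1 / 2) * u) / 2 = ((n : ℝ) + 1) * u := by
      ring
    rw [h1, h2] at h
    push_cast
    linarith [ih, h]

lemma fejer_id (N : ℕ) (u : ℝ) :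
    Real.sin (u / 2) ^ 2 * ((N : ℝ) + ∑ k ∈ Finset.Icc 1 N, 2 * ((N : ℝ) - k) * Real.cos (k * u))
      = Real.sin ((N : ℝ) * u / 2) ^ 2 := by
  induction N with
  | zero => simp
  | succ n ih =>
    rw [Finset.sum_Icc_succ_top (by omega : 1 ≤ n + 1)]
    have hd := dirichlet_id n u
    have key := sin_sq_sub_sin_sq' (((n : ℝ) + 1) * u / 2) ((n : ℝ) * u / 2)
    have h1 : ((n : ℝ) + 1) * u / 2 + (n : ℝ) * u / 2 = ((n : ℝ) + 1 / 2) * u := by ring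
    have h2 : ((n : ℝ) + 1) * u / 2 - (n : ℝ) * u / 2 = u / 2 := by ring
    rw [h1, h2] at key
    have hsplit : ∑ k ∈ Finset.Icc 1 n, 2 * ((↑(n + 1) : ℝ) - k) * Real.cos (k * u)
        = (∑ k ∈ Finset.Icc 1 n, 2 * ((n : ℝ) - k) * Real.cos (k * u))
          + ∑ k ∈ Finset.Icc 1 n, 2 * Real.cos (k * u) := by
      rw [← Finset.sum_add_distrib]
      refine Finset.sum_congr rfl fun k _ => ?_
      push_cast; ring
    push_cast at hsplit ⊢
    rw [hsplit]
    push_cast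
    linear_combination ih + Real.sin (u / 2) * hd - key

noncomputable def fejerK (N : ℕ) (u : ℝ) : ℝ :=
  1 + ∑ k ∈ Finset.Icc 1 N, 2 * (1 - (k : ℝ) / N) * Real.cos (k * u)

lemma fejerK_continuous (N : ℕ) : Continuous (fejerK N) := by
  unfold fejerK; fun_prop

lemma fejerK_mul (N : ℕ) (hN : 1 ≤ N) (u : ℝ) :
    (N : ℝ) * fejerK N u
      = (N : ℝ) + ∑ k ∈ Finset.Icc 1 N, 2 * ((N : ℝ) - k) * Real.cos (k * u) := by
  have hN0 : (N : ℝ) ≠ 0 := Nat.cast_ne_zero.mpr (by omega)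
  rw [fejerK, mul_add, mul_one, Finset.mul_sum]
  congr 1
  refine Finset.sum_congr rfl fun k _ => ?_
  field_simp

lemma fejerK_closed (N : ℕ) (hN : 1 ≤ N) (u : ℝ) :
    Real.sin (u / 2) ^ 2 * ((N : ℝ) * fejerK N u) = Real.sin ((N : ℝ) * u / 2) ^ 2 := by
  rw [fejerK_mul N hN u]; exact fejer_id N u

lemma fejerK_nonneg (N : ℕ) (hN : 1 ≤ N) (u : ℝ) : 0 ≤ fejerK N u := by
  have hNpos : (0 : ℝ) < N := by exact_mod_cast Nat.pos_of_ne_zero (by omega)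
  by_cases hs : Real.sin (u / 2) = 0
  · obtain ⟨m, hm⟩ := Real.sin_eq_zero_iff.mp hs
    rw [fejerK]
    have hterm : ∀ k ∈ Finset.Icc 1 N, 0 ≤ 2 * (1 - (k : ℝ) / N) * Real.cos (k * u) := by
      intro k hk
      rw [Finset.mem_Icc] at hk
      have hc : Real.cos ((k : ℝ) * u) = 1 := by
        have hu : u = 2 * ((m : ℝ) * π) := by linarith
        have : (k : ℝ) * u = ((k : ℤ) * m : ℤ) * (2 * π) := by
          rw [hu]; push_cast; ring
        rw [this, Real.cos_int_mul_two_pi]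
      rw [hc, mul_one]
      have : (k : ℝ) / N ≤ 1 := by
        rw [div_le_one hNpos]
        exact_mod_cast hk.2
      linarith
    have := Finset.sum_nonneg hterm
    linarith
  · have h := fejerK_closed N hN u
    have hs2 : 0 < Real.sin (u / 2) ^ 2 := by positivity
    by_contra hcon
    push_neg at hcon
    nlinarith [sq_nonneg (Real.sin ((N : ℝ) * u / 2)), mul_pos hs2 hNpos]

lemma fejerK_le (N : ℕ) (hN : 1 ≤ N) (u : ℝ) (hs : Real.sin (u / 2) ≠ 0) :
    fejerK N u ≤ 1 / ((N : ℝ) * Real.sin (u / 2) ^ 2) := by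
  have hNpos : (0 : ℝ) < N := by exact_mod_cast Nat.pos_of_ne_zero (by omega)
  have hs2 : 0 < Real.sin (u / 2) ^ 2 := by positivity
  have h := fejerK_closed N hN u
  have hle : Real.sin ((N : ℝ) * u / 2) ^ 2 ≤ 1 := by
    rw [← Real.sin_sq_add_cos_sq ((N : ℝ) * u / 2)]
    nlinarith [sq_nonneg (Real.cos ((N : ℝ) * u / 2))]
  rw [le_div_iff₀ (by positivity)]
  nlinarith

lemma integral_cos_nat (k : ℕ) (hk : 1 ≤ k) :
    ∫ u in (-π : ℝ)..π, Real.cos ((k : ℝ) * u) = 0 := by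
  have hk0 : (k : ℝ) ≠ 0 := Nat.cast_ne_zero.mpr (by omega)
  rw [intervalIntegral.integral_comp_mul_left (fun x => Real.cos x) hk0]
  have h1 : Real.sin ((k : ℝ) * π) = 0 := by exact_mod_cast Real.sin_nat_mul_pi k
  have h2 : Real.sin ((k : ℝ) * (-π)) = 0 := by rw [mul_neg, Real.sin_neg, h1, neg_zero]
  rw [integral_cos, h1, h2]
  simp

lemma integral_fejerK (N : ℕ) :
    ∫ u in (-π : ℝ)..π, fejerK N u = 2 * π := by
  have hck : ∀ k : ℕ, Continuous (fun u : ℝ => 2 * (1 - (k : ℝ) / N) * Real.cos (k * u)) := by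
    intro k; fun_prop
  have h1 : ∀ k : ℕ, IntervalIntegrable (fun u => 2 * (1 - (k : ℝ) / N) * Real.cos (k * u))
      MeasureTheory.volume (-π : ℝ) π := fun k => (hck k).intervalIntegrable _ _
  unfold fejerK
  have hadd := intervalIntegral.integral_add (μ := MeasureTheory.volume) (a := (-π : ℝ)) (b := π)
    (f := fun _ : ℝ => (1 : ℝ))
    (g := fun u => ∑ k ∈ Finset.Icc 1 N, 2 * (1 - (k : ℝ) / N) * Real.cos (k * u))
    (continuous_const.intervalIntegrable _ _)
    ((continuous_finset_sum _ fun k _ => hck k).intervalIntegrable _ _)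
  rw [hadd, intervalIntegral.integral_finset_sum (fun k _ => h1 k)]
  have h2 : ∀ k ∈ Finset.Icc 1 N,
      (∫ u in (-π : ℝ)..π, 2 * (1 - (k : ℝ) / N) * Real.cos (k * u)) = 0 := by
    intro k hk
    rw [Finset.mem_Icc] at hk
    rw [intervalIntegral.integral_const_mul, integral_cos_nat k hk.1, mul_zero]
  rw [Finset.sum_congr rfl h2]
  simp
  ring


set_option maxHeartbeats 1600000 in
open Real Filter intervalIntegral in
/-- **Fejér's theorem.** For a continuous `2π`-periodic function `f` on `[0, 2π]`
(`f 0 = f (2π)`), the Fejér means of its Fourier series converge to `f` uniformly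
on `[0, 2π]`. -/
theorem fejer_uniform_convergence (f : ℝ → ℝ)
    (hf : ContinuousOn f (Set.Icc 0 (2 * π))) (hper : f 0 = f (2 * π))
    (a b : ℕ → ℝ)
    (ha : ∀ k : ℕ, a k = (1 / π) * ∫ t in (0 : ℝ)..(2 * π), Real.cos (k * t) * f t)
    (hb : ∀ k : ℕ, b k = (1 / π) * ∫ t in (0 : ℝ)..(2 * π), Real.sin (k * t) * f t) :
    TendstoUniformlyOn
      (fun (N : ℕ) (t : ℝ) => a 0 / 2 + ∑ k ∈ Finset.Icc 1 N,
        (1 - (k : ℝ) / N) * (a k * Real.cos (k * t) + b k * Real.sin (k * t)))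
      f atTop (Set.Icc 0 (2 * π)) := by
  have hπ : 0 < π := Real.pi_pos
  haveI : Fact ((0 : ℝ) < 2 * π) := ⟨by linarith⟩
  set g : ℝ → ℝ := fun x => AddCircle.liftIco (2 * π) 0 f (x : AddCircle (2 * π)) with hgdef
  have hgcont : Continuous g :=
    (AddCircle.liftIco_zero_continuous hper (by simpa using hf)).comp
      (AddCircle.continuous_mk' (2 * π))
  have hgeq : ∀ x ∈ Set.Ico (0 : ℝ) (2 * π), g x = f x := fun x hx =>
    AddCircle.liftIco_zero_coe_apply hx
  have hgper : Function.Periodic g (2 * π) := by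
    intro x
    simp only [hgdef]
    congr 1
    exact AddCircle.coe_add_period (2 * π) x
  have hgIcc : ∀ x ∈ Set.Icc (0 : ℝ) (2 * π), g x = f x := by
    intro x hx
    rcases hx.2.lt_or_eq with h | h
    · exact hgeq x ⟨hx.1, h⟩
    · have h0 : g (2 * π) = g 0 := by
        have := hgper 0; rwa [zero_add] at this
      rw [h, h0, hgeq 0 ⟨le_refl _, by linarith⟩, hper]
  have hred : ∀ x : ℝ, ∃ y, y ∈ Set.Ico (0 : ℝ) (2 * π) ∧ g y = g x ∧
      ∀ u : ℝ, g (y - u) = g (x - u) := by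
    intro x
    refine ⟨x - ⌊x / (2 * π)⌋ * (2 * π),
      ⟨Int.sub_floor_div_mul_nonneg x (by linarith), Int.sub_floor_div_mul_lt x (by linarith)⟩,
      hgper.sub_int_mul_eq _, fun u => ?_⟩
    have h1 := hgper.sub_int_mul_eq (x := x - u) (n := ⌊x / (2 * π)⌋)
    rw [show x - ⌊x / (2 * π)⌋ * (2 * π) - u = x - u - ⌊x / (2 * π)⌋ * (2 * π) by ring]
    exact h1
  obtain ⟨M0, hM0⟩ := (isCompact_Icc : IsCompact (Set.Icc (0 : ℝ) (2 * π))).exists_bound_of_continuousOn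
    hgcont.continuousOn
  set M := max M0 0 with hMdef
  have hM : ∀ x : ℝ, |g x| ≤ M := by
    intro x
    obtain ⟨y, hy, hyx, -⟩ := hred x
    rw [← hyx]
    have := hM0 y ⟨hy.1, hy.2.le⟩
    rw [Real.norm_eq_abs] at this
    exact this.trans (le_max_left _ _)
  have hM_nonneg : 0 ≤ M := le_max_right _ _
  have huc : ∀ ε : ℝ, 0 < ε → ∃ δ : ℝ, 0 < δ ∧ δ ≤ π ∧
      ∀ t u : ℝ, |u| ≤ δ → |g (t - u) - g t| ≤ ε := by
    intro ε hε
    have hUC := (isCompact_Icc : IsCompact (Set.Icc (-(2 * π)) (4 * π))).uniformContinuousOn_of_continuous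
      hgcont.continuousOn
    rw [Metric.uniformContinuousOn_iff] at hUC
    obtain ⟨δ₀, hδ₀, hδ⟩ := hUC ε hε
    refine ⟨min (δ₀ / 2) π, lt_min (by linarith) hπ, min_le_right _ _, ?_⟩
    intro t u hu
    obtain ⟨y, hy, hyt, hytu⟩ := hred t
    rw [← hyt, ← hytu u]
    have huπ : |u| ≤ π := hu.trans (min_le_right _ _)
    have hu0 : |u| < δ₀ := lt_of_le_of_lt (hu.trans (min_le_left _ _)) (by linarith)
    have hu1 := abs_le.mp huπ
    have h1 : y - u ∈ Set.Icc (-(2 * π)) (4 * π) :=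
      ⟨by linarith [hy.1], by linarith [hy.2]⟩
    have h2 : y ∈ Set.Icc (-(2 * π)) (4 * π) := ⟨by linarith [hy.1], by linarith [hy.2]⟩
    have h3 : dist (y - u) y < δ₀ := by
      rw [Real.dist_eq, show y - u - y = -u by ring, abs_neg]; exact hu0
    have := hδ (y - u) h1 y h2 h3
    rw [Real.dist_eq] at this
    exact this.le
  -- coefficients via g
  have hfg : ∀ h : ℝ → ℝ, (∫ t in (0 : ℝ)..(2 * π), h t * f t)
      = ∫ t in (0 : ℝ)..(2 * π), h t * g t := by
    intro h
    apply intervalIntegral.integral_congr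
    intro x hx
    rw [Set.uIcc_of_le (by linarith : (0 : ℝ) ≤ 2 * π)] at hx
    simp only [hgIcc x hx]
  have hag : ∀ k : ℕ, a k = (1 / π) * ∫ t in (0 : ℝ)..(2 * π), Real.cos (k * t) * g t :=
    fun k => by rw [ha k, hfg]
  have hbg : ∀ k : ℕ, b k = (1 / π) * ∫ t in (0 : ℝ)..(2 * π), Real.sin (k * t) * g t :=
    fun k => by rw [hb k, hfg]
  have hstepA : ∀ (k : ℕ) (t : ℝ), a k * Real.cos (k * t) + b k * Real.sin (k * t)
      = (1 / π) * ∫ s in (0 : ℝ)..(2 * π), Real.cos (k * (t - s)) * g s := by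
    intro k t
    have hint : ∀ s : ℝ, Real.cos ((k : ℝ) * (t - s)) * g s
        = Real.cos ((k : ℝ) * t) * (Real.cos ((k : ℝ) * s) * g s)
          + Real.sin ((k : ℝ) * t) * (Real.sin ((k : ℝ) * s) * g s) := by
      intro s
      rw [show (k : ℝ) * (t - s) = (k : ℝ) * t - (k : ℝ) * s by ring, Real.cos_sub]
      ring
    have c1 : Continuous fun s : ℝ => Real.cos ((k : ℝ) * t) * (Real.cos ((k : ℝ) * s) * g s) :=
      continuous_const.mul ((Real.continuous_cos.comp (continuous_const.mul continuous_id)).mul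
        hgcont)
    have c2 : Continuous fun s : ℝ => Real.sin ((k : ℝ) * t) * (Real.sin ((k : ℝ) * s) * g s) :=
      continuous_const.mul ((Real.continuous_sin.comp (continuous_const.mul continuous_id)).mul
        hgcont)
    simp only [hint]
    rw [intervalIntegral.integral_add (c1.intervalIntegrable _ _) (c2.intervalIntegrable _ _),
      intervalIntegral.integral_const_mul, intervalIntegral.integral_const_mul,
      hag k, hbg k]
    ring
  have hstepB : ∀ N : ℕ, 1 ≤ N → ∀ t : ℝ,
      a 0 / 2 + ∑ k ∈ Finset.Icc 1 N,
          (1 - (k : ℝ) / N) * (a k * Real.cos (k * t) + b k * Real.sin (k * t))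
        = (1 / (2 * π)) * ∫ s in (0 : ℝ)..(2 * π), fejerK N (t - s) * g s := by
    intro N hN t
    have hexp : ∀ s : ℝ, fejerK N (t - s) * g s
        = g s + ∑ k ∈ Finset.Icc 1 N,
            2 * (1 - (k : ℝ) / N) * (Real.cos ((k : ℝ) * (t - s)) * g s) := by
      intro s
      rw [fejerK, add_mul, one_mul, Finset.sum_mul]
      congr 1
      exact Finset.sum_congr rfl fun k _ => by ring
    have hck : ∀ k : ℕ, Continuous fun s : ℝ =>
        2 * (1 - (k : ℝ) / N) * (Real.cos ((k : ℝ) * (t - s)) * g s) :=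
      fun k => continuous_const.mul ((Real.continuous_cos.comp
        (continuous_const.mul (continuous_const.sub continuous_id))).mul hgcont)
    have hI : ∫ s in (0 : ℝ)..(2 * π), fejerK N (t - s) * g s
        = (∫ s in (0 : ℝ)..(2 * π), g s) + ∑ k ∈ Finset.Icc 1 N,
            2 * (1 - (k : ℝ) / N) * ∫ s in (0 : ℝ)..(2 * π), Real.cos ((k : ℝ) * (t - s)) * g s := by
      simp only [hexp]
      rw [intervalIntegral.integral_add (hgcont.intervalIntegrable _ _)
        ((continuous_finset_sum _ fun k _ => hck k).intervalIntegrable _ _),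
        intervalIntegral.integral_finset_sum (fun k _ => (hck k).intervalIntegrable _ _)]
      congr 1
      exact Finset.sum_congr rfl fun k _ => intervalIntegral.integral_const_mul _ _
    have ha0 : ∫ s in (0 : ℝ)..(2 * π), g s = π * a 0 := by
      have := hag 0
      simp only [Nat.cast_zero, zero_mul, Real.cos_zero, one_mul] at this
      rw [this]
      field_simp
    have hterm : ∀ k ∈ Finset.Icc 1 N,
        2 * (1 - (k : ℝ) / N) * ∫ s in (0 : ℝ)..(2 * π), Real.cos ((k : ℝ) * (t - s)) * g s
          = 2 * (1 - (k : ℝ) / N) * (π * (a k * Real.cos (k * t) + b k * Real.sin (k * t))) := by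
      intro k _
      congr 1
      rw [hstepA k t]
      field_simp
    rw [hI, Finset.sum_congr rfl hterm, ha0, mul_add, Finset.mul_sum]
    congr 1
    · field_simp
    · exact Finset.sum_congr rfl fun k _ => by field_simp
  have hstepC : ∀ (N : ℕ) (t : ℝ), (∫ s in (0 : ℝ)..(2 * π), fejerK N (t - s) * g s)
      = ∫ u in (-π : ℝ)..π, fejerK N u * g (t - u) := by
    intro N t
    have h1 := intervalIntegral.integral_comp_sub_left (a := (0 : ℝ)) (b := 2 * π)
      (fun u => fejerK N u * g (t - u)) t
    simp only [sub_sub_cancel] at h1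
    rw [h1, sub_zero]
    have hKper : Function.Periodic (fun u => fejerK N u * g (t - u)) (2 * π) := by
      intro x
      have hK : fejerK N (x + 2 * π) = fejerK N x := by
        unfold fejerK
        congr 1
        refine Finset.sum_congr rfl fun k _ => ?_
        congr 1
        rw [show (k : ℝ) * (x + 2 * π) = (k : ℝ) * x + (k : ℤ) * (2 * π) by push_cast; ring,
          Real.cos_add_int_mul_two_pi]
      simp only
      rw [hK, show t - (x + 2 * π) = t - x - 2 * π by ring, hgper.sub_eq]
    have h2 := hKper.intervalIntegral_add_eq (t - 2 * π) (-π)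
    rw [show t - 2 * π + 2 * π = t by ring, show -π + 2 * π = π by ring] at h2
    exact h2
  have hrep : ∀ N : ℕ, 1 ≤ N → ∀ t : ℝ,
      (a 0 / 2 + ∑ k ∈ Finset.Icc 1 N,
          (1 - (k : ℝ) / N) * (a k * Real.cos (k * t) + b k * Real.sin (k * t))) - g t
        = (1 / (2 * π)) * ∫ u in (-π : ℝ)..π, fejerK N u * (g (t - u) - g t) := by
    intro N hN t
    have hc1 : Continuous fun u : ℝ => fejerK N u * g (t - u) :=
      (fejerK_continuous N).mul (hgcont.comp (continuous_const.sub continuous_id))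
    have h1 : ∫ u in (-π : ℝ)..π, fejerK N u * (g (t - u) - g t)
        = (∫ u in (-π : ℝ)..π, fejerK N u * g (t - u))
          - ∫ u in (-π : ℝ)..π, fejerK N u * g t := by
      rw [← intervalIntegral.integral_sub (f := fun u => fejerK N u * g (t - u)) (g := fun u => fejerK N u * g t) (hc1.intervalIntegrable _ _)
        (((fejerK_continuous N).mul continuous_const).intervalIntegrable _ _)]
      congr 1
      funext u
      ring
    have h2 : (∫ u in (-π : ℝ)..π, fejerK N u * g t) = 2 * π * g t := by
      rw [intervalIntegral.integral_mul_const, integral_fejerK]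
    rw [hstepB N hN t, hstepC N t, h1, h2]
    field_simp
  rw [Metric.tendstoUniformlyOn_iff]
  intro ε hε
  obtain ⟨δ, hδ0, hδπ, hδ⟩ := huc (ε / 4) (by linarith)
  have hsδ : 0 < Real.sin (δ / 2) := Real.sin_pos_of_pos_of_lt_pi (by linarith) (by linarith)
  set C := 2 * M / Real.sin (δ / 2) ^ 2 with hCdef
  have hC0 : 0 ≤ C := by positivity
  obtain ⟨N₀, hN₀⟩ := exists_nat_gt (C / (ε / 2))
  rw [eventually_atTop]
  refine ⟨max N₀ 1 + 1, fun N hNge t ht => ?_⟩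
  have hN1 : 1 ≤ N := le_trans (by omega) hNge
  have hNpos : (0 : ℝ) < N := by
    have : 0 < N := by omega
    exact_mod_cast this
  have hCN : C / N < ε / 2 := by
    have hN₀N : (N₀ : ℝ) < N := by
      have : N₀ < N := by omega
      exact_mod_cast this
    rw [div_lt_iff₀ hNpos]
    have h1 : C / (ε / 2) < N := lt_trans hN₀ hN₀N
    calc C = C / (ε / 2) * (ε / 2) := by field_simp
      _ < (N : ℝ) * (ε / 2) := by exact mul_lt_mul_of_pos_right h1 (by linarith)
      _ = ε / 2 * N := by ring
  have hpt : ∀ u ∈ Set.Icc (-π) π,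
      |fejerK N u * (g (t - u) - g t)| ≤ ε / 4 * fejerK N u + C / N := by
    intro u hu
    have hK0 := fejerK_nonneg N hN1 u
    have habs : |fejerK N u * (g (t - u) - g t)| = fejerK N u * |g (t - u) - g t| := by
      rw [abs_mul, abs_of_nonneg hK0]
    have hCN0 : 0 ≤ C / N := by positivity
    by_cases hcase : |u| ≤ δ
    · rw [habs]
      have h1 : fejerK N u * |g (t - u) - g t| ≤ fejerK N u * (ε / 4) :=
        mul_le_mul_of_nonneg_left (hδ t u hcase) hK0
      nlinarith
    · push_neg at hcase
      have huπ : |u| ≤ π := abs_le.mpr ⟨hu.1, hu.2⟩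
      have hs2 : Real.sin (δ / 2) ^ 2 ≤ Real.sin (u / 2) ^ 2 := by
        have h1 : Real.sin (u / 2) ^ 2 = Real.sin (|u| / 2) ^ 2 := by
          rcases abs_cases u with ⟨h, -⟩ | ⟨h, -⟩
          · rw [h]
          · rw [h, neg_div, Real.sin_neg]; ring
        rw [h1]
        have hmono : Real.sin (δ / 2) ≤ Real.sin (|u| / 2) :=
          Real.sin_le_sin_of_le_of_le_pi_div_two (by linarith) (by linarith) (by linarith)
        nlinarith
      have hsne : Real.sin (u / 2) ≠ 0 := by
        intro h0
        rw [h0] at hs2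
        nlinarith
      have hKle := fejerK_le N hN1 u hsne
      have hgb : |g (t - u) - g t| ≤ 2 * M := by
        calc |g (t - u) - g t| ≤ |g (t - u)| + |g t| := abs_sub _ _
          _ ≤ M + M := add_le_add (hM _) (hM _)
          _ = 2 * M := by ring
      rw [habs]
      have hsu2 : 0 < Real.sin (u / 2) ^ 2 := by
        have := sq_nonneg (Real.sin (u / 2))
        rcases this.lt_or_eq with h | h
        · exact h
        · exact absurd (pow_eq_zero_iff (n := 2) (by norm_num) |>.mp h.symm) hsne
      have h3 : fejerK N u * |g (t - u) - g t| ≤ 1 / ((N : ℝ) * Real.sin (u / 2) ^ 2) * (2 * M) :=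
        mul_le_mul hKle hgb (abs_nonneg _) (by positivity)
      have h4 : 1 / ((N : ℝ) * Real.sin (u / 2) ^ 2) * (2 * M) ≤ C / N := by
        have hL : 1 / ((N : ℝ) * Real.sin (u / 2) ^ 2) * (2 * M)
            = 2 * M / ((N : ℝ) * Real.sin (u / 2) ^ 2) := by ring
        rw [hL, hCdef, div_div]
        gcongr 2 * M / ?_
        nlinarith
      have h5 : 0 ≤ ε / 4 * fejerK N u := by positivity
      linarith
  have hfgt : f t = g t := (hgIcc t ht).symm
  have hrepN := hrep N hN1 t
  have hc2 : Continuous fun u : ℝ => fejerK N u * (g (t - u) - g t) :=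
    (fejerK_continuous N).mul ((hgcont.comp (continuous_const.sub continuous_id)).sub
      continuous_const)
  have habs_int : |∫ u in (-π : ℝ)..π, fejerK N u * (g (t - u) - g t)|
      ≤ ∫ u in (-π : ℝ)..π, |fejerK N u * (g (t - u) - g t)| :=
    intervalIntegral.abs_integral_le_integral_abs (by linarith)
  have hmono2 : (∫ u in (-π : ℝ)..π, |fejerK N u * (g (t - u) - g t)|)
      ≤ ∫ u in (-π : ℝ)..π, (ε / 4 * fejerK N u + C / N) :=
    intervalIntegral.integral_mono_on (by linarith) (hc2.abs.intervalIntegrable _ _)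
      (((continuous_const.mul (fejerK_continuous N)).add continuous_const).intervalIntegrable _ _) hpt
  have hval : (∫ u in (-π : ℝ)..π, (ε / 4 * fejerK N u + C / N))
      = ε / 4 * (2 * π) + C / N * (2 * π) := by
    rw [intervalIntegral.integral_add (f := fun u => ε / 4 * fejerK N u) (g := fun _ => C / N) ((continuous_const.mul (fejerK_continuous N)).intervalIntegrable _ _)
      (continuous_const.intervalIntegrable _ _), intervalIntegral.integral_const_mul,
      integral_fejerK, intervalIntegral.integral_const]
    have : π - -π = 2 * π := by ring
    rw [this, smul_eq_mul]
    ring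
  have hfinal : |(a 0 / 2 + ∑ k ∈ Finset.Icc 1 N,
      (1 - (k : ℝ) / N) * (a k * Real.cos (k * t) + b k * Real.sin (k * t))) - g t|
      ≤ ε / 4 + C / N := by
    rw [hrepN, abs_mul, abs_of_pos (by positivity : (0 : ℝ) < 1 / (2 * π))]
    have h6 : |∫ u in (-π : ℝ)..π, fejerK N u * (g (t - u) - g t)|
        ≤ ε / 4 * (2 * π) + C / N * (2 * π) := le_trans habs_int (hmono2.trans_eq hval)
    calc 1 / (2 * π) * |∫ u in (-π : ℝ)..π, fejerK N u * (g (t - u) - g t)|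
        ≤ 1 / (2 * π) * (ε / 4 * (2 * π) + C / N * (2 * π)) :=
          mul_le_mul_of_nonneg_left h6 (by positivity)
      _ = ε / 4 + C / N := by field_simp
  rw [Real.dist_eq, hfgt, abs_sub_comm]
  calc |(a 0 / 2 + ∑ k ∈ Finset.Icc 1 N,
      (1 - (k : ℝ) / N) * (a k * Real.cos (k * t) + b k * Real.sin (k * t))) - g t|
      ≤ ε / 4 + C / N := hfinal
    _ < ε / 4 + ε / 2 := by linarith
    _ < ε := by linarith
end
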